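/- With notation as above (finite lattice L with elements α₁,...,αₘ, admissible sequences F and G, and sets R_F(α), R_G(α)): F ⊑ G if and only if R_G(α) ⊆ R_F(α) for all α ∈ L. -/

import Mathlib

/-- An operation sequence on a lattice `L`: `f n` is the `(n+1)`-ary operation,
so `f n` corresponds to the paper's `f_{n+1}`. -/
def OpSeq (L : Type) : Type := ∀ n : ℕ, (Fin (n + 1) → L) → L

/-- Admissibility: (HC1), (HC2), (HC3), (HC4), (HC7), (HC8). -/
def IsAdmissible {L : Type} [CompleteLattice L] (f : OpSeq L) : Prop :=
  -- (HC1)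
  (∀ n (α : Fin (n + 1) → L) (k : Fin (n + 1)), f n α ≤ α k) ∧
  -- (HC2) monotonicity
  (∀ n (α β : Fin (n + 1) → L), α ≤ β → f n α ≤ f n β) ∧
  -- (HC3)
  (∀ n (α : Fin (n + 2) → L), f (n + 1) α ≤ f n (fun i => α i.succ)) ∧
  -- (HC4) symmetry
  (∀ n (α : Fin (n + 1) → L) (π : Equiv.Perm (Fin (n + 1))), f n (α ∘ π) = f n α) ∧
  -- (HC7) join distributivity in each argument
  (∀ n (i : Fin (n + 1)) (α : Fin (n + 1) → L) (S : Set L),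
      f n (Function.update α i (sSup S)) = ⨆ b ∈ S, f n (Function.update α i b)) ∧
  -- (HC8)
  (∀ n k (hkn : k ≤ n) (α : Fin (n + 1) → L),
      f k (fun i : Fin (k + 1) =>
        if hi : (i : ℕ) < k then α ⟨i.1, by omega⟩
        else f (n - k) (fun j : Fin (n - k + 1) => α ⟨k + j.1, by have := j.2; omega⟩)) ≤
      f n α)

/-- `(δ, ε)` is a splitting pair. -/
def IsSplittingPair {L : Type} [Lattice L] [BoundedOrder L] (δ ε : L) : Prop :=
  δ < ⊤ ∧ ⊥ < ε ∧ ∀ α : L, ε ≤ α ∨ α ≤ δ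

/-- `L` splits. -/
def Splits (L : Type) [Lattice L] [BoundedOrder L] : Prop :=
  ∃ δ ε : L, IsSplittingPair δ ε

/-- `L` splits strongly. -/
def SplitsStrongly (L : Type) [Lattice L] [BoundedOrder L] : Prop :=
  ∃ δ ε : L, IsSplittingPair δ ε ∧ ε ≤ δ

/-- The list consisting of `e 1` repeated `a 1` times, ..., `e m` repeated `a m` times. -/
def repList {L : Type} (m : ℕ) (e : Fin m → L) (a : Fin m → ℕ) : List L :=
  (List.ofFn fun i => List.replicate (a i) (e i)).flatten

/-- `E(F, a) = f_{a₁ + ⋯ + aₘ}(e 1, …, e 1, …, e m, …, e m)` (with multiplicities `a`);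
by convention `⊥` for `a = 0`. -/
def Efun {L : Type} [CompleteLattice L] (m : ℕ) (F : OpSeq L)
    (e : Fin m → L) (a : Fin m → ℕ) : L :=
  if h : (repList m e a).length = 0 then ⊥
  else F ((repList m e a).length - 1)
    (fun i => (repList m e a).get (Fin.cast (by omega) i))

theorem exists_perm_comp {α : Type*} [LinearOrder α] {n : ℕ} (f g : Fin n → α)
    (h : List.Perm (List.ofFn f) (List.ofFn g)) : ∃ σ : Equiv.Perm (Fin n), f ∘ σ = g := by
  refine ⟨(Tuple.sort g).symm.trans (Tuple.sort f), ?_⟩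
  have h1 : List.Perm (List.ofFn (f ∘ Tuple.sort f)) (List.ofFn (g ∘ Tuple.sort g)) :=
    ((Equiv.Perm.ofFn_comp_perm _ f).trans h).trans (Equiv.Perm.ofFn_comp_perm _ g).symm
  have h2 : f ∘ Tuple.sort f = g ∘ Tuple.sort g := by
    have := List.Perm.eq_of_sortedLE ((Tuple.monotone_sort f).sortedLE_ofFn)
      ((Tuple.monotone_sort g).sortedLE_ofFn) h1
    exact List.ofFn_injective this
  funext i
  have := congrFun h2 ((Tuple.sort g).symm i)
  simpa using this


theorem coe_flatten {L : Type} (ls : List (List L)) :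
    ((ls.flatten : List L) : Multiset L) = (List.map (fun l : List L => (l : Multiset L)) ls).sum := by
  induction ls with
  | nil => simp
  | cons hd tl ih => simp [ih, ← Multiset.coe_add]

theorem repList_perm_aux {L : Type} (m n : ℕ) (e : Fin m → L) (c : Fin (n + 1) → Fin m) :
    List.Perm
      ((List.ofFn fun i =>
        List.replicate ((Finset.univ.filter fun j => c j = i).card) (e i)).flatten)
      (List.ofFn (e ∘ c)) := by
  classical
  rw [← Multiset.coe_eq_coe, coe_flatten, List.map_ofFn]
  rw [List.ofFn_eq_map (f := e ∘ c), ← Multiset.map_coe, List.sum_ofFn]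
  have huniv : ((List.finRange (n + 1) : List (Fin (n + 1))) : Multiset (Fin (n + 1)))
      = (Finset.univ : Finset (Fin (n + 1))).val := rfl
  rw [huniv]
  simp only [Function.comp_apply, Multiset.coe_replicate]
  rw [Multiset.ext]; intro b
  rw [Multiset.count_sum', Multiset.count_map]
  have hcard : (Multiset.filter (fun a => b = e (c a)) Finset.univ.val).card
      = (Finset.univ.filter fun j => b = e (c j)).card := by
    rw [← Finset.filter_val]
    rfl
  rw [hcard, Finset.card_eq_sum_card_fiberwise (f := c) (t := Finset.univ) (fun _ _ => Finset.mem_univ _)]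
  refine Finset.sum_congr rfl fun i _ => ?_
  rw [Multiset.count_replicate]
  by_cases hb : b = e i
  · rw [if_pos hb.symm]
    congr 1
    ext j
    simp only [Finset.mem_filter, Finset.mem_univ, true_and]
    constructor
    · intro h1; exact ⟨h1 ▸ hb, h1⟩
    · rintro ⟨_, h2⟩; exact h2
  · rw [if_neg fun h => hb h.symm]
    symm
    rw [Finset.card_eq_zero]
    ext j
    simp only [Finset.mem_filter, Finset.mem_univ, true_and, Finset.notMem_empty, iff_false]
    rintro ⟨h1, h2⟩
    exact hb (h2 ▸ h1)

theorem repList_length {L : Type} (m : ℕ) (e : Fin m → L) (a : Fin m → ℕ) :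
    (repList m e a).length = ∑ i, a i := by
  simp [repList, List.length_flatten, Function.comp_def, List.sum_ofFn]

theorem opseq_congr {L : Type} (F : OpSeq L) {n n' : ℕ} (h : n = n')
    (γ : Fin (n + 1) → L) (γ' : Fin (n' + 1) → L)
    (hγ : ∀ i : Fin (n + 1), γ i = γ' (Fin.cast (by omega) i)) : F n γ = F n' γ' := by
  subst h
  congr 1
  funext i
  simpa [Fin.ext_iff] using hγ i

theorem Efun_eq {L : Type} [CompleteLattice L] (m : ℕ) (F : OpSeq L)
    (e : Fin m → L) (a : Fin m → ℕ) {n : ℕ} (γ : Fin (n + 1) → L)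
    (h : repList m e a = List.ofFn γ) : Efun m F e a = F n γ := by
  have hlen : (repList m e a).length = n + 1 := by rw [h]; simp
  rw [Efun, dif_neg (by omega)]
  refine opseq_congr F (by omega) _ _ fun i => ?_
  rw [List.get_eq_getElem, List.getElem_of_eq h, List.getElem_ofFn]
  congr 1


theorem sqsubseteq_iff_RF_reverse_inclusion (L : Type) [CompleteLattice L] [Finite L]
    (m : ℕ) (e : Fin m → L) (he : Function.Surjective e)
    (F G : OpSeq L) (hF : IsAdmissible F) (hG : IsAdmissible G) :
    (∀ n (β : Fin (n + 1) → L), F n β ≤ G n β) ↔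
      ∀ α : L, {a : Fin m → ℕ | a ≠ 0 ∧ Efun m G e a ≤ α} ⊆
        {a : Fin m → ℕ | a ≠ 0 ∧ Efun m F e a ≤ α} := by
  classical
  constructor
  · intro h α a ha
    obtain ⟨ha0, hle⟩ := ha
    refine ⟨ha0, le_trans ?_ hle⟩
    by_cases hl : (repList m e a).length = 0
    · simp [Efun, hl]
    · simp only [Efun, dif_neg hl]
      exact h _ _
  · intro h n β
    have hc : ∀ j, e (Classical.choose (he (β j))) = β j :=
      fun j => Classical.choose_spec (he (β j))
    set c : Fin (n + 1) → Fin m := fun j => Classical.choose (he (β j)) with hcdef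
    set a : Fin m → ℕ := fun i => (Finset.univ.filter fun j => c j = i).card with hadef
    have hperm : List.Perm (repList m e a) (List.ofFn β) := by
      have hp := repList_perm_aux m n e c
      have hβ : e ∘ c = β := funext hc
      rw [hβ] at hp
      exact hp
    have hlen : (repList m e a).length = n + 1 := by
      rw [hperm.length_eq, List.length_ofFn]
    have ha0 : a ≠ 0 := by
      intro h0
      rw [repList_length, h0] at hlen
      simp at hlen
    set γ : Fin (n + 1) → L := fun i => (repList m e a).get (Fin.cast hlen.symm i) with hγ
    have hofn : repList m e a = List.ofFn γ := by
      apply List.ext_get (by simp [hlen])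
      intro i h1 h2
      rw [List.get_eq_getElem, List.get_eq_getElem, List.getElem_ofFn]
      simp [hγ, List.get_eq_getElem]
    have hpermγ : List.Perm (List.ofFn γ) (List.ofFn β) := hofn ▸ hperm
    letI : Fintype L := Fintype.ofFinite L
    let lo : LinearOrder L := LinearOrder.lift' (Fintype.equivFin L) (Fintype.equivFin L).injective
    obtain ⟨σ, hσ⟩ := @exists_perm_comp L lo _ γ β hpermγ
    have hFγ : F n γ = F n β := by rw [← hσ]; exact (hF.2.2.2.1 n γ σ).symm
    have hGγ : G n γ = G n β := by rw [← hσ]; exact (hG.2.2.2.1 n γ σ).symm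
    have hmem : a ∈ {a : Fin m → ℕ | a ≠ 0 ∧ Efun m G e a ≤ G n β} :=
      ⟨ha0, by rw [Efun_eq m G e a γ hofn, hGγ]⟩
    obtain ⟨-, hFle⟩ := h (G n β) hmem
    rw [Efun_eq m F e a γ hofn, hFγ] at hFle
    exact hFle
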